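/- Let 𝓧 ⊆ L¹ contain all simple random variables and let ρ: 𝓧 → [−∞, ∞] be dilatation monotone with the Fatou property. Then for every X ∈ 𝓧, ρ(X) = sup over finite partitions π ∈ Π of ρ(E[X|π]). -/

import Mathlib

open MeasureTheory Filter Topology

variable {Ω : Type*} [MeasurableSpace Ω]

/-- A finite measurable partition of `Ω` whose members have positive measure. -/
structure FinPartition (μ : Measure Ω) where
  parts : Finset (Set Ω)
  measSet : ∀ A ∈ parts, MeasurableSet A
  pairwiseDisj : ∀ A ∈ parts, ∀ B ∈ parts, A ≠ B → Disjoint A B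
  cover : ⋃ A ∈ parts, A = Set.univ
  pos : ∀ A ∈ parts, 0 < μ A

/-- Conditional expectation of `X` with respect to the finite partition `π`:
`E[X|π] = ∑_{A ∈ π} (∫_A X dμ / μ(A)) 1_A`. -/
noncomputable def pCondExp (μ : Measure Ω) (π : FinPartition μ) (X : Ω → ℝ) : Ω → ℝ :=
  fun ω => ∑ A ∈ π.parts, Set.indicator A (fun _ => (∫ x in A, X x ∂μ) / (μ A).toReal) ω

/-- A simple random variable. -/
def IsSimpleRV (X : Ω → ℝ) : Prop := Measurable X ∧ (Set.range X).Finite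

/-- Membership in the smallest ideal of `L¹` generated by `S`. -/
def MemIdeal (μ : Measure Ω) (S : Set (Ω → ℝ)) (X : Ω → ℝ) : Prop :=
  ∃ (n : ℕ) (Y : Fin n → Ω → ℝ) (l : Fin n → ℝ),
    (∀ i, Y i ∈ S) ∧ (∀ i, 0 ≤ l i) ∧ ∀ᵐ ω ∂μ, |X ω| ≤ ∑ i, l i * |Y i ω|

/-- Dilatation monotonicity of `ρ` on `𝓧`. -/
def DilMono (μ : Measure Ω) (𝓧 : Set (Ω → ℝ)) (ρ : (Ω → ℝ) → EReal) : Prop :=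
  ∀ X ∈ 𝓧, ∀ π : FinPartition μ, ρ (pCondExp μ π X) ≤ ρ X

/-- The Fatou property of `ρ` on `𝓧`. -/
def FatouProp (μ : Measure Ω) (𝓧 : Set (Ω → ℝ)) (ρ : (Ω → ℝ) → EReal) : Prop :=
  ∀ (Xn : ℕ → Ω → ℝ) (X : Ω → ℝ), (∀ n, Xn n ∈ 𝓧) → X ∈ 𝓧 →
    (∀ᵐ ω ∂μ, Tendsto (fun n => Xn n ω) atTop (nhds (X ω))) →
    (∃ Y, MemIdeal μ 𝓧 Y ∧ ∀ᵐ ω ∂μ, ∀ n, |Xn n ω| ≤ Y ω) →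
    ρ X ≤ liminf (fun n => ρ (Xn n)) atTop

/-- Convergence of a net in the `σ(L¹, 𝓛)` topology. -/
def TendstoWeakSimple (μ : Measure Ω) {ι : Type*} (l : Filter ι)
    (Xn : ι → Ω → ℝ) (X : Ω → ℝ) : Prop :=
  ∀ Z : Ω → ℝ, IsSimpleRV Z →
    Tendsto (fun i => ∫ ω, Xn i ω * Z ω ∂μ) l (nhds (∫ ω, X ω * Z ω ∂μ))

/-- The extension `ρ̄(X) = sup_{π ∈ Π} ρ(E[X|π])`. -/
noncomputable def rhoBar (μ : Measure Ω) (ρ : (Ω → ℝ) → EReal) (X : Ω → ℝ) : EReal :=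
  ⨆ π : FinPartition μ, ρ (pCondExp μ π X)

/-- The conjugate `ρ^#(Y) = sup_{X ∈ 𝓛} { E[XY] - ρ(X) }`. -/
noncomputable def sharp (μ : Measure Ω) (ρ : (Ω → ℝ) → EReal) (Y : Ω → ℝ) : EReal :=
  ⨆ X : {X : Ω → ℝ // IsSimpleRV X}, (((∫ ω, X.1 ω * Y ω ∂μ : ℝ) : EReal) - ρ X.1)

-- auxiliary lemmas

lemma finite_range_sum {ι : Type*} (s : Finset ι) (f : ι → Ω → ℝ)
    (h : ∀ i ∈ s, (Set.range (f i)).Finite) :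
    (Set.range (fun ω => ∑ i ∈ s, f i ω)).Finite := by
  classical
  induction s using Finset.induction_on with
  | empty => simpa using Set.finite_singleton (0 : ℝ) |>.subset (by
      rintro x ⟨ω, rfl⟩; simp)
  | @insert a s hmem ih =>
    have h1 : (Set.range (f a)).Finite := h _ (Finset.mem_insert_self _ _)
    have h2 : (Set.range (fun ω => ∑ i ∈ s, f i ω)).Finite :=
      ih (fun i hi => h _ (Finset.mem_insert_of_mem hi))
    have : (Set.range (fun ω => ∑ i ∈ insert a s, f i ω)) ⊆
        Set.image2 (· + ·) (Set.range (f a)) (Set.range (fun ω => ∑ i ∈ s, f i ω)) := by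
      rintro x ⟨ω, rfl⟩
      simp only [Finset.sum_insert hmem]
      exact Set.mem_image2_of_mem ⟨ω, rfl⟩ ⟨ω, rfl⟩
    exact (h1.image2 _ h2).subset this

lemma isSimpleRV_pCondExp (μ : Measure Ω) (π : FinPartition μ) (X : Ω → ℝ) :
    IsSimpleRV (pCondExp μ π X) := by
  constructor
  · exact Finset.measurable_sum _ fun A hA =>
      (measurable_const.indicator (π.measSet A hA))
  · exact finite_range_sum _ _ fun A hA => (Set.finite_singleton 0 |>.insert _).subset (by
      rintro x ⟨ω, rfl⟩
      by_cases hω : ω ∈ A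
      · rw [Set.indicator_of_mem hω]; exact Set.mem_insert _ _
      · rw [Set.indicator_of_notMem hω]; exact Set.mem_insert_iff.2 (Or.inr rfl))

lemma pCondExp_apply (μ : Measure Ω) (π : FinPartition μ) (X : Ω → ℝ) {A : Set Ω}
    (hA : A ∈ π.parts) {ω : Ω} (hω : ω ∈ A) :
    pCondExp μ π X ω = (∫ x in A, X x ∂μ) / (μ A).toReal := by
  unfold pCondExp
  rw [Finset.sum_eq_single_of_mem A hA, Set.indicator_of_mem hω]
  intro B hB hBA
  rw [Set.indicator_of_notMem]
  exact fun hωB => Set.disjoint_left.1 (π.pairwiseDisj B hB A hA hBA) hωB hω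

lemma pCondExp_congr_ae (μ : Measure Ω) (π : FinPartition μ) {X Y : Ω → ℝ}
    (h : X =ᵐ[μ] Y) : pCondExp μ π X = pCondExp μ π Y := by
  funext ω
  unfold pCondExp
  refine Finset.sum_congr rfl fun A hA => ?_
  congr 1
  funext
  rw [setIntegral_congr_ae (π.measSet A hA) (h.mono fun ω h _ => h)]

lemma avg_mem_Icc (μ : Measure Ω) [IsFiniteMeasure μ] {X : Ω → ℝ} (hint : Integrable X μ)
    {S : Set Ω} (hS : MeasurableSet S) (hpos : μ S ≠ 0) {a b : ℝ}
    (hsub : ∀ ω ∈ S, X ω ∈ Set.Icc a b) :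
    (∫ x in S, X x ∂μ) / (μ S).toReal ∈ Set.Icc a b := by
  have hfin : μ S ≠ ⊤ := (measure_lt_top μ S).ne
  have hm : 0 < (μ S).toReal := ENNReal.toReal_pos hpos hfin
  have hIa : a * (μ S).toReal ≤ ∫ x in S, X x ∂μ := by
    have := setIntegral_mono_on (integrableOn_const (measure_lt_top μ S).ne)
      hint.integrableOn hS (fun x hx => (hsub x hx).1)
    simpa [setIntegral_const, mul_comm, Measure.real] using this
  have hIb : ∫ x in S, X x ∂μ ≤ b * (μ S).toReal := by
    have := setIntegral_mono_on hint.integrableOn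
      (integrableOn_const (measure_lt_top μ S).ne) hS (fun x hx => (hsub x hx).2)
    simpa [setIntegral_const, mul_comm, Measure.real] using this
  constructor
  · rw [le_div_iff₀ hm]; exact hIa
  · rw [div_le_iff₀ hm]; exact hIb

lemma tendsto_tail_integral {μ : Measure Ω} [IsFiniteMeasure μ] {X : Ω → ℝ}
    (hmeas : Measurable X) (hint : Integrable X μ) :
    Tendsto (fun c : ℕ => ∫ ω in {ω | (c : ℝ) ≤ |X ω|}, |X ω| ∂μ) atTop (𝓝 0) := by
  have hms : ∀ c : ℕ, MeasurableSet {ω | (c : ℝ) ≤ |X ω|} := fun c =>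
    measurableSet_le measurable_const hmeas.abs
  have key : Tendsto (fun c : ℕ => ∫ ω, Set.indicator {ω | (c : ℝ) ≤ |X ω|}
      (fun ω => |X ω|) ω ∂μ) atTop (𝓝 (∫ _ω, (0:ℝ) ∂μ)) := by
    apply tendsto_integral_of_dominated_convergence (fun ω => |X ω|)
    · exact fun c => ((hmeas.abs.indicator (hms c)).aestronglyMeasurable)
    · exact hint.abs
    · intro c
      filter_upwards with ω
      rw [Real.norm_eq_abs]
      by_cases h : ω ∈ {ω | (c : ℝ) ≤ |X ω|}
      · rw [Set.indicator_of_mem h, abs_abs]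
      · rw [Set.indicator_of_notMem h, abs_zero]; exact abs_nonneg _
    · filter_upwards with ω
      obtain ⟨N, hN⟩ := exists_nat_gt (|X ω|)
      apply tendsto_const_nhds.congr' (_ : (fun _ => (0:ℝ)) =ᶠ[atTop] _)
      filter_upwards [eventually_ge_atTop N] with c hc
      rw [Set.indicator_of_notMem]
      simp only [Set.mem_setOf_eq, not_le]
      exact hN.trans_le (by exact_mod_cast hc)
  simpa only [integral_zero, integral_indicator (hms _)] using key

set_option maxHeartbeats 1000000 in
lemma exists_good_partition (μ : Measure Ω) [IsProbabilityMeasure μ]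
    {X : Ω → ℝ} (hmeas : Measurable X) (hint : Integrable X μ)
    (K : ℕ) (hK : μ {ω | |X ω| ≤ (K : ℝ)} ≠ 0) (n : ℕ) :
    ∃ π : FinPartition μ,
      (∀ ω, |pCondExp μ π X ω| ≤ |X ω| + (K + 2)) ∧
      ∃ N : Set Ω, μ N = 0 ∧
        ∀ ω, ω ∉ N → |X ω| < n → |pCondExp μ π X ω - X ω| ≤ 2 * (1/2 : ℝ)^n := by
  classical
  have hR : (0:ℝ) < 2 ^ n := by positivity
  have hR1 : (1:ℝ) ≤ 2 ^ n := one_le_pow₀ (by norm_num)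
  set R : ℝ := 2 ^ n with hRdef
  set C : ℤ → Set Ω := fun k => X ⁻¹' Set.Ico ((k : ℝ)/R) (((k : ℝ)+1)/R) with hCdef
  have hmeasC : ∀ k, MeasurableSet (C k) := fun k => hmeas measurableSet_Ico
  have hmemC : ∀ ω, ω ∈ C ⌊X ω * R⌋ := by
    intro ω
    show X ω ∈ Set.Ico _ _
    constructor
    · rw [div_le_iff₀ hR]
      exact Int.floor_le _
    · rw [lt_div_iff₀ hR]
      exact Int.lt_floor_add_one _
  have hCIcc : ∀ k : ℤ, ∀ ω ∈ C k, X ω ∈ Set.Icc ((k:ℝ)/R) (((k:ℝ)+1)/R) :=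
    fun k ω h => Set.Ico_subset_Icc_self h
  have hwidth : ∀ k : ℤ, ∀ x ∈ Set.Icc ((k:ℝ)/R) (((k:ℝ)+1)/R),
      ∀ y ∈ Set.Icc ((k:ℝ)/R) (((k:ℝ)+1)/R), |x - y| ≤ (1/2:ℝ)^n := by
    intro k x hx y hy
    have hw : ((k:ℝ)+1)/R - (k:ℝ)/R = (1/2:ℝ)^n := by
      have h1 : ((k:ℝ)+1) - k = 1 := by ring
      rw [div_sub_div_same, h1, hRdef, one_div, one_div, inv_pow]
    rw [abs_sub_le_iff]
    constructor <;> [skip; skip] <;>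
      · rw [← hw]
        rcases hx with ⟨hx1, hx2⟩
        rcases hy with ⟨hy1, hy2⟩
        linarith
  have hrange : ∀ (c : ℕ) (ω : Ω), -(c:ℝ) ≤ X ω → X ω < c →
      ⌊X ω * R⌋ ∈ Finset.Icc (-(c:ℤ) * 2^n) ((c:ℤ) * 2^n - 1) := by
    intro c ω h1 h2
    rw [Finset.mem_Icc]
    constructor
    · apply Int.le_floor.2
      push_cast
      rw [hRdef]
      nlinarith
    · have h3 : ⌊X ω * R⌋ < (c:ℤ) * 2^n := by
        apply Int.floor_lt.2
        push_cast
        rw [hRdef]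
        nlinarith
      omega
  have hdisjC : ∀ k l : ℤ, k ≠ l → Disjoint (C k) (C l) := by
    have key : ∀ k l : ℤ, k < l → Disjoint (C k) (C l) := by
      intro k l hkl
      rw [Set.disjoint_left]
      intro ω h1 h2
      have hkl' : ((k:ℝ)+1) ≤ (l:ℝ) := by exact_mod_cast hkl
      have hb : ((k:ℝ)+1)/R ≤ (l:ℝ)/R := by gcongr
      simp only [hCdef, Set.mem_preimage, Set.mem_Ico] at h1 h2
      linarith [h1.2, h2.1]
    intro k l hkl
    rcases hkl.lt_or_gt with h|h
    exacts [key _ _ h, (key _ _ h).symm]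
  -- choose the anchor cell k₀
  set J : Finset ℤ := Finset.Icc (-((K:ℤ)+1) * 2^n) (((K:ℤ)+1) * 2^n - 1) with hJdef
  have hJcover : {ω | |X ω| ≤ (K:ℝ)} ⊆ ⋃ k ∈ J, C k := by
    intro ω hω
    simp only [Set.mem_setOf_eq] at hω
    have habs := abs_le.1 hω
    have := hrange (K+1) ω (by push_cast; linarith [habs.1]) (by push_cast; linarith [habs.2])
    refine Set.mem_biUnion ?_ (hmemC ω)
    have hJeq : J = Finset.Icc (-((K+1 : ℕ):ℤ) * 2^n) (((K+1:ℕ):ℤ) * 2^n - 1) := by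
      rw [hJdef]; congr 1 <;> push_cast <;> ring
    rw [hJeq]
    exact this
  obtain ⟨k₀, hk₀J, hk₀pos⟩ : ∃ k₀ ∈ J, μ (C k₀) ≠ 0 := by
    by_contra h
    push_neg at h
    exact hK (measure_mono_null hJcover
      ((measure_biUnion_null_iff J.countable_toSet).2 h))
  set m : ℝ := (μ (C k₀)).toReal with hmdef
  have hm : 0 < m :=
    ENNReal.toReal_pos hk₀pos (measure_lt_top μ _).ne
  -- choose the cutoff c
  set ε : ℝ := (1/2:ℝ)^n * m / (K+2) with hεdef
  have hε : 0 < ε := by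
    apply div_pos (mul_pos (by positivity) hm) (by positivity)
  obtain ⟨c, hcbig, hctail⟩ : ∃ c : ℕ, ((n:ℝ) ≤ c ∧ (K:ℝ)+2 ≤ c) ∧
      ∫ ω in {ω | (c:ℝ) ≤ |X ω|}, |X ω| ∂μ ≤ ε := by
    have h1 := (tendsto_tail_integral hmeas hint).eventually (ge_mem_nhds hε)
    have h2 : ∀ᶠ c : ℕ in atTop, ((n:ℝ) ≤ c ∧ (K:ℝ)+2 ≤ c) := by
      filter_upwards [eventually_ge_atTop (max n (K+2))] with c hc
      constructor
      · exact_mod_cast le_trans (le_max_left _ _) hc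
      · push_cast
        have : K + 2 ≤ c := le_trans (le_max_right _ _) hc
        exact_mod_cast this
    exact ((h2.and h1).exists).imp fun c h => ⟨h.1, h.2⟩
  have hc1 : (1:ℝ) ≤ c := by linarith [hcbig.2, Nat.cast_nonneg (α := ℝ) K]
  -- the index set and the partition pieces
  set I : Finset ℤ := Finset.Icc (-(c:ℤ) * 2^n) ((c:ℤ) * 2^n - 1) with hIdef
  have hJI : J ⊆ I := by
    apply Finset.Icc_subset_Icc
    · have : ((K:ℤ)+1) ≤ (c:ℤ) := by exact_mod_cast (by exact_mod_cast (by linarith [hcbig.2] : (K:ℝ)+1 ≤ c))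
      nlinarith [pow_pos (by norm_num : (0:ℤ) < 2) n]
    · have : ((K:ℤ)+1) ≤ (c:ℤ) := by exact_mod_cast (by exact_mod_cast (by linarith [hcbig.2] : (K:ℝ)+1 ≤ c))
      nlinarith [pow_pos (by norm_num : (0:ℤ) < 2) n]
  set G : Finset (Set Ω) := ((I.erase k₀).filter fun k => μ (C k) ≠ 0).image C with hGdef
  have hmemG : ∀ A ∈ G, ∃ k, k ∈ I ∧ k ≠ k₀ ∧ μ (C k) ≠ 0 ∧ C k = A := by
    intro A hA
    simp only [hGdef, Finset.mem_image, Finset.mem_filter, Finset.mem_erase] at hA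
    obtain ⟨k, ⟨⟨hk1, hk2⟩, hk3⟩, hk4⟩ := hA
    exact ⟨k, hk2, hk1, hk3, hk4⟩
  set SU : Set Ω := ⋃ A ∈ G, A with hSUdef
  set P : Set Ω := SUᶜ with hPdef
  have hCk₀P : C k₀ ⊆ P := by
    intro ω hω hωSU
    simp only [hSUdef, Set.mem_iUnion] at hωSU
    obtain ⟨A, hA, hωA⟩ := hωSU
    obtain ⟨k, _, hkne, _, hkA⟩ := hmemG A hA
    rw [← hkA] at hωA
    exact Set.disjoint_left.1 (hdisjC k k₀ hkne) hωA hω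
  set T : Set Ω := (X ⁻¹' Set.Ico (-(c:ℝ)) (c:ℝ))ᶜ with hTdef
  have hCI : ∀ k ∈ I, C k ⊆ X ⁻¹' Set.Ico (-(c:ℝ)) (c:ℝ)  := by
    intro k hk
    simp only [hIdef, Finset.mem_Icc] at hk
    apply Set.preimage_mono
    apply Set.Ico_subset_Ico
    · rw [le_div_iff₀ hR]
      calc -(c:ℝ) * R = ((-(c:ℤ) * 2^n : ℤ) : ℝ) := by push_cast; rw [hRdef]
        _ ≤ ((k:ℤ):ℝ) := by exact_mod_cast hk.1
    · rw [div_le_iff₀ hR]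
      calc ((k:ℝ) + 1) = (((k + 1 : ℤ)):ℝ) := by push_cast; ring
        _ ≤ (((c:ℤ) * 2^n : ℤ):ℝ) := by exact_mod_cast (by omega : k + 1 ≤ (c:ℤ) * 2^n)
        _ = (c:ℝ) * R := by push_cast; rw [hRdef]
  have hTP : T ⊆ P := by
    intro ω hω hωSU
    simp only [hSUdef, Set.mem_iUnion] at hωSU
    obtain ⟨A, hA, hωA⟩ := hωSU
    obtain ⟨k, hkI, _, _, hkA⟩ := hmemG A hA
    rw [← hkA] at hωA
    exact hω (hCI k hkI hωA)
  set Nn : Set Ω := ⋃ k ∈ (I.filter fun k => μ (C k) = 0), C k with hNndef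
  have hNn : μ Nn = 0 := by
    apply (measure_biUnion_null_iff (I.filter fun k => μ (C k) = 0).countable_toSet).2
    intro k hk
    exact (Finset.mem_filter.1 hk).2
  have hPsub : P ⊆ C k₀ ∪ T ∪ Nn := by
    intro ω hω
    by_cases hωT : ω ∈ T
    · exact Or.inl (Or.inr hωT)
    · have hXω : X ω ∈ Set.Ico (-(c:ℝ)) (c:ℝ) := by
        simpa [hTdef] using hωT
      have hk := hrange c ω hXω.1 hXω.2
      set k := ⌊X ω * R⌋ with hkdef
      by_cases hkk₀ : k = k₀
      · exact Or.inl (Or.inl (hkk₀ ▸ hmemC ω))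
      · by_cases hμk : μ (C k) = 0
        · refine Or.inr (Set.mem_biUnion ?_ (hmemC ω))
          exact Finset.mem_filter.2 ⟨hk, hμk⟩
        · exfalso
          apply hω
          simp only [hSUdef, Set.mem_iUnion]
          refine ⟨C k, ?_, hmemC ω⟩
          simp only [hGdef, Finset.mem_image]
          exact ⟨k, Finset.mem_filter.2 ⟨Finset.mem_erase.2 ⟨hkk₀, hk⟩, hμk⟩, rfl⟩
  -- the partition
  have hmeasSU : MeasurableSet SU := by
    apply Finset.measurableSet_biUnion
    intro A hA
    obtain ⟨k, _, _, _, hkA⟩ := hmemG A hA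
    exact hkA ▸ hmeasC k
  -- analytic facts
  have hmT : MeasurableSet T := (hmeas measurableSet_Ico).compl
  have hTsub : T ⊆ {ω | (c:ℝ) ≤ |X ω|} := by
    intro ω hω
    simp only [hTdef, Set.mem_compl_iff, Set.mem_preimage, Set.mem_Ico, not_and_or, not_le,
      not_lt] at hω
    simp only [Set.mem_setOf_eq]
    rcases hω with h | h
    · rw [abs_of_neg (by linarith : X ω < 0)]
      linarith
    · exact h.trans (le_abs_self _)
  have habs_nonneg : (0 : Ω → ℝ) ≤ᵐ[μ.restrict {ω | (c:ℝ) ≤ |X ω|}] fun ω => |X ω| :=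
    Filter.Eventually.of_forall fun ω => by simpa using abs_nonneg (X ω)
  have htail' : ∫ x in T, |X x| ∂μ ≤ ε := by
    refine le_trans (setIntegral_mono_set hint.abs.integrableOn habs_nonneg
      (HasSubset.Subset.eventuallyLE hTsub)) hctail
  set t : ℝ := (μ T).toReal with htdef
  have ht0 : 0 ≤ t := ENNReal.toReal_nonneg
  have htε : t ≤ ε := by
    have hconst : ∫ _x in T, (c:ℝ) ∂μ ≤ ∫ x in T, |X x| ∂μ := by
      apply setIntegral_mono_on (integrableOn_const (measure_lt_top μ T).ne)
        hint.abs.integrableOn hmT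
      intro x hx
      exact hTsub hx
    rw [setIntegral_const, smul_eq_mul, Measure.real] at hconst
    nlinarith [htail']
  set p : ℝ := (μ P).toReal with hpdef
  have hpm : m ≤ p := by
    rw [hmdef, hpdef]
    exact ENNReal.toReal_le_toReal (measure_lt_top μ _).ne (measure_lt_top μ _).ne |>.2
      (measure_mono hCk₀P)
  have hp : 0 < p := lt_of_lt_of_le hm hpm
  have hpmt : p ≤ m + t := by
    have h1 : μ P ≤ μ (C k₀) + μ T := by
      calc μ P ≤ μ (C k₀ ∪ T ∪ Nn) := measure_mono hPsub
        _ ≤ μ (C k₀ ∪ T) + μ Nn := measure_union_le _ _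
        _ = μ (C k₀ ∪ T) := by rw [hNn, add_zero]
        _ ≤ μ (C k₀) + μ T := measure_union_le _ _
    calc p ≤ ((μ (C k₀) + μ T)).toReal :=
        ENNReal.toReal_le_toReal (measure_lt_top μ _).ne
          (by simp [ENNReal.add_ne_top, (measure_lt_top μ _).ne]) |>.2 h1
      _ = m + t := ENNReal.toReal_add (measure_lt_top μ _).ne (measure_lt_top μ _).ne
  set a_c : ℝ := (∫ x in C k₀, X x ∂μ) / m with hacdef
  have hacIcc : a_c ∈ Set.Icc ((k₀:ℝ)/R) (((k₀:ℝ)+1)/R) :=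
    avg_mem_Icc μ hint (hmeasC k₀) hk₀pos (hCIcc k₀)
  have hacK : |a_c| ≤ (K:ℝ)+1 := by
    simp only [hJdef, Finset.mem_Icc] at hk₀J
    have hlow : -((K:ℝ)+1) ≤ (k₀:ℝ)/R := by
      rw [le_div_iff₀ hR]
      calc -((K:ℝ)+1) * R = ((-((K:ℤ)+1) * 2^n : ℤ) : ℝ) := by push_cast [hRdef]; ring
        _ ≤ ((k₀:ℤ):ℝ) := by exact_mod_cast hk₀J.1
    have hhigh : ((k₀:ℝ)+1)/R ≤ (K:ℝ)+1 := by
      rw [div_le_iff₀ hR]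
      calc ((k₀:ℝ)+1) = (((k₀ + 1 : ℤ)):ℝ) := by push_cast; ring
        _ ≤ (((((K:ℤ)+1)) * 2^n : ℤ):ℝ) := by exact_mod_cast (by omega : k₀ + 1 ≤ ((K:ℤ)+1) * 2^n)
        _ = ((K:ℝ)+1) * R := by push_cast; rw [hRdef]
    rw [abs_le]
    exact ⟨le_trans hlow hacIcc.1, le_trans hacIcc.2 hhigh⟩
  have he : |∫ x in P, X x ∂μ - ∫ x in C k₀, X x ∂μ| ≤ ε := by
    have hinter := integral_inter_add_diff (s := P) (t := C k₀) (μ := μ) (f := X)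
      (hmeasC k₀) hint.integrableOn
    rw [Set.inter_eq_right.2 hCk₀P] at hinter
    have hdiffeq : ∫ x in P, X x ∂μ - ∫ x in C k₀, X x ∂μ = ∫ x in P \ C k₀, X x ∂μ := by
      linarith
    rw [hdiffeq]
    have h1 : |∫ x in P \ C k₀, X x ∂μ| ≤ ∫ x in P \ C k₀, |X x| ∂μ := by
      simpa [Real.norm_eq_abs] using
        norm_integral_le_integral_norm (μ := μ.restrict (P \ C k₀)) X
    have hsub2 : P \ C k₀ ⊆ T ∪ Nn := by
      intro ω hω
      rcases hPsub hω.1 with (h | h) | h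
      · exact absurd h hω.2
      · exact Or.inl h
      · exact Or.inr h
    have h2 : ∫ x in P \ C k₀, |X x| ∂μ ≤ ∫ x in T ∪ Nn, |X x| ∂μ :=
      setIntegral_mono_set hint.abs.integrableOn
        (Filter.Eventually.of_forall fun ω => by simpa using abs_nonneg (X ω))
        (HasSubset.Subset.eventuallyLE hsub2)
    have h3 : ∫ x in T ∪ Nn, |X x| ∂μ = ∫ x in T, |X x| ∂μ := by
      apply integral_union_eq_left_of_ae
      rw [Measure.restrict_eq_zero.2 hNn]
      simp
    linarith [htail']
  set v : ℝ := (∫ x in P, X x ∂μ) / p with hvdef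
  have hva : |v - a_c| ≤ (1/2:ℝ)^n := by
    have hacm : a_c * m = ∫ x in C k₀, X x ∂μ := div_mul_cancel₀ _ hm.ne'
    have hnum : ∫ x in P, X x ∂μ - a_c * p =
        (∫ x in P, X x ∂μ - ∫ x in C k₀, X x ∂μ) - a_c * (p - m) := by
      rw [← hacm]; ring
    have hnumabs : |∫ x in P, X x ∂μ - a_c * p| ≤ (1/2:ℝ)^n * m := by
      rw [hnum]
      have hpmabs : |p - m| ≤ t := by
        rw [abs_of_nonneg (by linarith : (0:ℝ) ≤ p - m)]
        linarith
      calc |(∫ x in P, X x ∂μ - ∫ x in C k₀, X x ∂μ) - a_c * (p - m)|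
          ≤ |∫ x in P, X x ∂μ - ∫ x in C k₀, X x ∂μ| + |a_c * (p - m)| := abs_sub _ _
        _ ≤ ε + ((K:ℝ)+1) * ε := by
            rw [abs_mul]
            have := mul_le_mul hacK hpmabs (abs_nonneg _) (by positivity)
            nlinarith
        _ ≤ (1/2:ℝ)^n * m := by
            have hKpos : (0:ℝ) < (K:ℝ)+2 := by positivity
            have hεeq : ((K:ℝ)+2) * ε = (1/2:ℝ)^n * m := by
              rw [hεdef]; field_simp
            have hring : ε + ((K:ℝ)+1) * ε = ((K:ℝ)+2) * ε := by ring
            linarith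
    have hveq : v - a_c = (∫ x in P, X x ∂μ - a_c * p)/p := by
      rw [hvdef]
      field_simp
    rw [hveq, abs_div, abs_of_pos hp]
    calc |∫ x in P, X x ∂μ - a_c * p| / p ≤ ((1/2:ℝ)^n * m) / p := by
          gcongr
      _ ≤ ((1/2:ℝ)^n * m) / m := div_le_div_of_nonneg_left (by positivity) hm hpm
      _ = (1/2:ℝ)^n := by field_simp
  have hpow1 : (1/2:ℝ)^n ≤ 1 := by
    apply pow_le_one₀ <;> norm_num
  refine ⟨⟨insert P G, ?_, ?_, ?_, ?_⟩, ?_, ?_⟩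
  · intro A hA
    rcases Finset.mem_insert.1 hA with rfl | hA
    · exact hmeasSU.compl
    · obtain ⟨k, _, _, _, hkA⟩ := hmemG A hA
      exact hkA ▸ hmeasC k
  · intro A hA B hB hAB
    have hsub : ∀ B ∈ G, B ⊆ SU := fun B hB x hx => Set.mem_biUnion hB hx
    rcases Finset.mem_insert.1 hA with rfl | hA <;> rcases Finset.mem_insert.1 hB with rfl | hB
    · exact absurd rfl hAB
    · exact disjoint_compl_left.mono_right (hsub B hB)
    · exact (disjoint_compl_left.mono_right (hsub A hA)).symm
    · obtain ⟨k, _, _, _, hkA⟩ := hmemG A hA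
      obtain ⟨l, _, _, _, hlB⟩ := hmemG B hB
      have hkl : k ≠ l := by
        rintro rfl
        exact hAB (hkA ▸ hlB ▸ rfl)
      exact hkA ▸ hlB ▸ hdisjC k l hkl
  · rw [Finset.set_biUnion_insert]
    rw [hPdef, Set.compl_union_self]
  · intro A hA
    rcases Finset.mem_insert.1 hA with rfl | hA
    · exact lt_of_lt_of_le (pos_iff_ne_zero.2 hk₀pos) (measure_mono hCk₀P)
    · obtain ⟨k, _, _, hkμ, hkA⟩ := hmemG A hA
      exact hkA ▸ pos_iff_ne_zero.2 hkμ
  · -- domination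
    intro ω
    by_cases hωSU : ω ∈ SU
    · simp only [hSUdef, Set.mem_iUnion] at hωSU
      obtain ⟨A, hA, hωA⟩ := hωSU
      obtain ⟨k, hkI, hkne, hkμ, hkA⟩ := hmemG A hA
      subst hkA
      rw [pCondExp_apply μ _ X (Finset.mem_insert_of_mem hA) hωA]
      have havg := avg_mem_Icc μ hint (hmeasC k) hkμ (hCIcc k)
      have hXmem := hCIcc k ω hωA
      have := hwidth k _ havg _ hXmem
      have habs : |(∫ x in C k, X x ∂μ) / (μ (C k)).toReal| ≤
          |X ω| + (1/2:ℝ)^n := by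
        calc |(∫ x in C k, X x ∂μ) / (μ (C k)).toReal|
            = |((∫ x in C k, X x ∂μ) / (μ (C k)).toReal - X ω) + X ω| := by congr 1; ring
          _ ≤ |(∫ x in C k, X x ∂μ) / (μ (C k)).toReal - X ω| + |X ω| := abs_add_le _ _
          _ ≤ |X ω| + (1/2:ℝ)^n := by linarith [this]
      have hK0 : (0:ℝ) ≤ K := Nat.cast_nonneg K
      push_cast
      linarith [habs, hpow1]
    · have hωP : ω ∈ P := hωSU
      rw [pCondExp_apply μ _ X (Finset.mem_insert_self _ _) hωP]
      rw [← hpdef, ← hvdef]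
      have : |v| ≤ |a_c| + |v - a_c| := by
        calc |v| = |a_c + (v - a_c)| := by congr 1; ring
          _ ≤ |a_c| + |v - a_c| := abs_add_le _ _
      have hK0 : (0:ℝ) ≤ K := Nat.cast_nonneg K
      push_cast
      linarith [abs_nonneg (X ω), hacK, hva, hpow1]
  · -- convergence
    refine ⟨Nn, hNn, ?_⟩
    intro ω hωN hωn
    have hX1 : -(c:ℝ) ≤ X ω := by
      have := (abs_lt.1 hωn).1
      linarith [hcbig.1]
    have hX2 : X ω < c := by
      have := (abs_lt.1 hωn).2
      linarith [hcbig.1]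
    by_cases hωSU : ω ∈ SU
    · simp only [hSUdef, Set.mem_iUnion] at hωSU
      obtain ⟨A, hA, hωA⟩ := hωSU
      obtain ⟨k, hkI, hkne, hkμ, hkA⟩ := hmemG A hA
      subst hkA
      rw [pCondExp_apply μ _ X (Finset.mem_insert_of_mem hA) hωA]
      have havg := avg_mem_Icc μ hint (hmeasC k) hkμ (hCIcc k)
      have := hwidth k _ havg _ (hCIcc k ω hωA)
      have h2 : (0:ℝ) ≤ (1/2:ℝ)^n := by positivity
      linarith [this]
    · have hωP : ω ∈ P := hωSU
      rw [pCondExp_apply μ _ X (Finset.mem_insert_self _ _) hωP]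
      rw [← hpdef, ← hvdef]
      have hωC : ω ∈ C k₀ := by
        rcases hPsub hωP with (h | h) | h
        · exact h
        · exfalso
          apply h
          exact Set.mem_Ico.2 ⟨hX1, hX2⟩
        · exact absurd h hωN
      have hwa := hwidth k₀ _ hacIcc _ (hCIcc k₀ ω hωC)
      calc |v - X ω| ≤ |v - a_c| + |a_c - X ω| := abs_sub_le _ _ _
        _ ≤ 2 * (1/2:ℝ)^n := by linarith [hva, hwa]

/-- If `ρ` on `𝓧 ⊇ 𝓛` is dilatation monotone with the Fatou property, then
`ρ(X) = sup_{π ∈ Π} ρ(E[X|π])` for every `X ∈ 𝓧`. -/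
theorem stmt4 (μ : Measure Ω) [IsProbabilityMeasure μ] [NullSingletonClass μ]
    (𝓧 : Set (Ω → ℝ)) (h𝓧L1 : ∀ X ∈ 𝓧, Integrable X μ)
    (h𝓛 : ∀ Z : Ω → ℝ, IsSimpleRV Z → Z ∈ 𝓧)
    (ρ : (Ω → ℝ) → EReal)
    (hdil : DilMono μ 𝓧 ρ) (hFatou : FatouProp μ 𝓧 ρ) :
    ∀ X ∈ 𝓧, ρ X = ⨆ π : FinPartition μ, ρ (pCondExp μ π X) := by
  intro X hX
  refine le_antisymm ?_ (iSup_le fun π => hdil X hX π)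
  have hInt := h𝓧L1 X hX
  have ham : AEMeasurable X μ := hInt.aemeasurable
  set X' := ham.mk X with hX'def
  have hmeas' : Measurable X' := ham.measurable_mk
  have hXX' : X =ᵐ[μ] X' := ham.ae_eq_mk
  have hint' : Integrable X' μ := hInt.congr hXX'
  obtain ⟨K, hK⟩ : ∃ K : ℕ, μ {ω | |X' ω| ≤ (K:ℝ)} ≠ 0 := by
    by_contra h
    push_neg at h
    have h0 : μ (⋃ K : ℕ, {ω | |X' ω| ≤ (K:ℝ)}) = 0 := measure_iUnion_null h
    have huniv : (⋃ K : ℕ, {ω | |X' ω| ≤ (K:ℝ)}) = Set.univ := by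
      ext ω
      simp only [Set.mem_iUnion, Set.mem_setOf_eq, Set.mem_univ, iff_true]
      obtain ⟨N, hN⟩ := exists_nat_gt (|X' ω|)
      exact ⟨N, hN.le⟩
    rw [huniv, measure_univ] at h0
    norm_num at h0
  have hpart := fun n => exists_good_partition μ hmeas' hint' K hK n
  choose π hdom hconv using hpart
  choose N hN0 hN1 using hconv
  have hXnX' : ∀ n, pCondExp μ (π n) X = pCondExp μ (π n) X' := fun n =>
    pCondExp_congr_ae μ (π n) hXX'
  set Xn : ℕ → Ω → ℝ := fun n => pCondExp μ (π n) X with hXndef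
  have hmem : ∀ n, Xn n ∈ 𝓧 := fun n => h𝓛 _ (isSimpleRV_pCondExp μ (π n) X)
  have hae1 : ∀ᵐ ω ∂μ, ω ∉ ⋃ n, N n :=
    measure_eq_zero_iff_ae_notMem.1 (measure_iUnion_null hN0)
  have haeconv : ∀ᵐ ω ∂μ, Tendsto (fun n => Xn n ω) atTop (𝓝 (X ω)) := by
    filter_upwards [hXX', hae1] with ω hω1 hω2
    rw [tendsto_iff_norm_sub_tendsto_zero]
    apply squeeze_zero' (Filter.Eventually.of_forall fun n => norm_nonneg _)
      (g := fun n => 2 * (1/2:ℝ)^n)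
    · obtain ⟨M, hM⟩ := exists_nat_gt (|X' ω|)
      filter_upwards [eventually_ge_atTop M] with n hn
      rw [Real.norm_eq_abs, hXndef]
      simp only [hXnX' n, hω1]
      exact hN1 n ω (fun hc => hω2 (Set.mem_iUnion.2 ⟨n, hc⟩))
        (hM.trans_le (by exact_mod_cast hn))
    · have := tendsto_pow_atTop_nhds_zero_of_lt_one
        (by norm_num : (0:ℝ) ≤ 1/2) (by norm_num : (1/2:ℝ) < 1)
      simpa using this.const_mul (2:ℝ)
  have hbound : ∃ Y, MemIdeal μ 𝓧 Y ∧ ∀ᵐ ω ∂μ, ∀ n, |Xn n ω| ≤ Y ω := by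
    refine ⟨fun ω => |X ω| + ((K:ℝ) + 2), ?_, ?_⟩
    · refine ⟨2, ![X, fun _ => 1], ![1, (K:ℝ)+2], ?_, ?_, ?_⟩
      · intro i
        fin_cases i
        · exact hX
        · exact h𝓛 _ ⟨measurable_const,
            (Set.finite_singleton 1).subset (by rintro x ⟨ω, rfl⟩; simp)⟩
      · intro i
        fin_cases i
        · norm_num
        · show (0:ℝ) ≤ (K:ℝ) + 2
          positivity
      · filter_upwards with ω
        rw [Fin.sum_univ_two]
        simp only [Matrix.cons_val_zero, Matrix.cons_val_one, Matrix.head_cons]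
        rw [abs_of_nonneg (by positivity : (0:ℝ) ≤ |X ω| + ((K:ℝ)+2))]
        simp [abs_one]
    · filter_upwards [hXX'] with ω hω
      intro n
      rw [hXndef]
      simp only [hXnX' n]
      rw [hω]
      exact hdom n ω
  have hfin := hFatou Xn X hmem hX haeconv hbound
  refine le_trans hfin ?_
  rw [Filter.liminf_eq_iSup_iInf_of_nat]
  apply iSup_le
  intro k
  refine le_trans ?_ (le_iSup (fun π' => ρ (pCondExp μ π' X)) (π k))
  exact iInf₂_le k le_rfl
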